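/- arXiv:0806.1132 — 2 statements merged into one kernel-verified Lean document; each statement's English description precedes it below -/
import Mathlib

section
/- Let μ ∈ (0,1) and q₁ ∈ (0,1], and set n = 1, A₂ = 0, M_b = 0 (classical photogravitational case). Define x* = −μ + q₁^{2/3}/2 and y* = ±√(q₁^{2/3} − q₁^{4/3}/4). Then y* ≠ 0, at the point (x*, y*) one has r₁ = q₁^{1/3} and r₂ = 1, and (x*, y*) is an equilibrium point: ∂Ω/∂x(x*, y*) = 0 and ∂Ω/∂y(x*, y*) = 0. These are the triangular equilibrium points L₄ and L₅. -/
/-- Effective potential in the classical photogravitational case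
(`n = 1`, `A₂ = 0`, `M_b = 0`). -/
noncomputable def OmegaC (μ q₁ x y : ℝ) : ℝ :=
  (x ^ 2 + y ^ 2) / 2
    + (1 - μ) * q₁ / Real.sqrt ((x + μ) ^ 2 + y ^ 2)
    + μ / Real.sqrt ((x + μ - 1) ^ 2 + y ^ 2)

lemma hasDerivAt_const_div_sqrt (C : ℝ) {u : ℝ → ℝ} {u' x : ℝ}
    (hu : HasDerivAt u u' x) (hpos : 0 < u x) :
    HasDerivAt (fun t => C / Real.sqrt (u t))
      (-(C * u') / (2 * Real.sqrt (u x) * u x)) x := by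
  have hs : Real.sqrt (u x) ≠ 0 := by positivity
  have h1 : HasDerivAt (fun t => Real.sqrt (u t)) (u' / (2 * Real.sqrt (u x))) x :=
    hu.sqrt (ne_of_gt hpos)
  have h2 : HasDerivAt (fun t => C / Real.sqrt (u t))
      ((0 * Real.sqrt (u x) - C * (u' / (2 * Real.sqrt (u x)))) / Real.sqrt (u x) ^ 2) x :=
    (hasDerivAt_const x C).div h1 hs
  convert h2 using 1
  have hsq : Real.sqrt (u x) ^ 2 = u x := Real.sq_sqrt hpos.le
  rw [hsq]
  field_simp
  ring

/-- The triangular points `L₄`, `L₅`: with `x* = -μ + q₁^{2/3}/2` and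
`y* = ± √(q₁^{2/3} - q₁^{4/3}/4)` one has `y* ≠ 0`, `r₁ = q₁^{1/3}`, `r₂ = 1`,
and both partial derivatives of `Ω` vanish at `(x*, y*)`. -/
theorem triangular_points_are_equilibria
    (μ q₁ : ℝ) (hμ0 : 0 < μ) (hμ1 : μ < 1) (hq0 : 0 < q₁) (hq1 : q₁ ≤ 1)
    (σ : ℝ) (hσ : σ = 1 ∨ σ = -1)
    (xs ys : ℝ)
    (hxs : xs = -μ + q₁ ^ ((2 : ℝ) / 3) / 2)
    (hys : ys = σ * Real.sqrt (q₁ ^ ((2 : ℝ) / 3) - q₁ ^ ((4 : ℝ) / 3) / 4)) :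
    ys ≠ 0 ∧
    Real.sqrt ((xs + μ) ^ 2 + ys ^ 2) = q₁ ^ ((1 : ℝ) / 3) ∧
    Real.sqrt ((xs + μ - 1) ^ 2 + ys ^ 2) = 1 ∧
    deriv (fun s => OmegaC μ q₁ s ys) xs = 0 ∧
    deriv (fun s => OmegaC μ q₁ xs s) ys = 0 := by
  set a : ℝ := q₁ ^ ((2 : ℝ) / 3) with ha
  have ha0 : 0 < a := Real.rpow_pos_of_pos hq0 _
  have ha1 : a ≤ 1 := Real.rpow_le_one hq0.le hq1 (by norm_num)
  have h43 : q₁ ^ ((4 : ℝ) / 3) = a ^ 2 := by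
    rw [ha, ← Real.rpow_natCast (q₁ ^ ((2:ℝ)/3)) 2, ← Real.rpow_mul hq0.le]
    norm_num
  have hσ2 : σ ^ 2 = 1 := by rcases hσ with h | h <;> rw [h] <;> norm_num
  have hargpos : 0 < a - a ^ 2 / 4 := by nlinarith
  have hy2 : ys ^ 2 = a - a ^ 2 / 4 := by
    rw [hys, mul_pow, hσ2, one_mul, h43, Real.sq_sqrt hargpos.le]
  have hyne : ys ≠ 0 := by
    intro h; rw [h] at hy2; simp at hy2; nlinarith
  have hu1 : (xs + μ) ^ 2 + ys ^ 2 = a := by rw [hxs, hy2]; ring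
  have hu2 : (xs + μ - 1) ^ 2 + ys ^ 2 = 1 := by rw [hxs, hy2]; ring
  set r : ℝ := q₁ ^ ((1 : ℝ) / 3) with hr
  have hr0 : 0 < r := Real.rpow_pos_of_pos hq0 _
  have hr2 : r ^ 2 = a := by
    rw [hr, ha, ← Real.rpow_natCast (q₁ ^ ((1:ℝ)/3)) 2, ← Real.rpow_mul hq0.le]
    norm_num
  have hr3 : r ^ 3 = q₁ := by
    rw [hr, ← Real.rpow_natCast (q₁ ^ ((1:ℝ)/3)) 3, ← Real.rpow_mul hq0.le]
    norm_num
  have hs1 : Real.sqrt ((xs + μ) ^ 2 + ys ^ 2) = r := by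
    rw [hu1, ← hr2, Real.sqrt_sq hr0.le]
  have hs2 : Real.sqrt ((xs + μ - 1) ^ 2 + ys ^ 2) = 1 := by
    rw [hu2, Real.sqrt_one]
  refine ⟨hyne, hs1, hs2, ?_, ?_⟩
  · -- x partial derivative
    have hu1' : HasDerivAt (fun s => (s + μ) ^ 2 + ys ^ 2) (2 * (xs + μ)) xs := by
      have := (((hasDerivAt_id xs).add_const μ).pow 2).add_const (ys ^ 2)
      simpa using this
    have hu2' : HasDerivAt (fun s => (s + μ - 1) ^ 2 + ys ^ 2) (2 * (xs + μ - 1)) xs := by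
      have := ((((hasDerivAt_id xs).add_const μ).sub_const 1).pow 2).add_const (ys ^ 2)
      simpa using this
    have ht1 : HasDerivAt (fun s => (s ^ 2 + ys ^ 2) / 2) xs xs := by
      have := ((hasDerivAt_pow 2 xs).add_const (ys ^ 2)).div_const 2
      simpa using this
    have ht2 := hasDerivAt_const_div_sqrt ((1 - μ) * q₁) hu1' (by rw [hu1]; exact ha0)
    have ht3 := hasDerivAt_const_div_sqrt μ hu2' (by rw [hu2]; norm_num)
    rw [hs1] at ht2
    rw [hs2] at ht3
    simp only [hu1, hu2] at ht2 ht3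
    have H := (ht1.add ht2).add ht3
    have Hf : HasDerivAt (fun s => OmegaC μ q₁ s ys)
        (xs + -((1 - μ) * q₁ * (2 * (xs + μ))) / (2 * r * a)
          + -(μ * (2 * (xs + μ - 1))) / (2 * 1 * 1)) xs := H
    rw [Hf.deriv]
    have hra : r * a = q₁ := by rw [← hr2]; rw [← hr3]; ring
    have hxμ : xs + μ = a / 2 := by rw [hxs]; ring
    rw [hxμ]
    have h2ra : 2 * r * a = 2 * q₁ := by rw [mul_assoc, hra]
    rw [h2ra]
    field_simp
    rw [hxs]
    ring
  · -- y partial derivative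
    have hu1' : HasDerivAt (fun t => (xs + μ) ^ 2 + t ^ 2) (2 * ys) ys := by
      have := ((hasDerivAt_pow 2 ys).const_add ((xs + μ) ^ 2))
      simpa using this
    have hu2' : HasDerivAt (fun t => (xs + μ - 1) ^ 2 + t ^ 2) (2 * ys) ys := by
      have := ((hasDerivAt_pow 2 ys).const_add ((xs + μ - 1) ^ 2))
      simpa using this
    have ht1 : HasDerivAt (fun t => (xs ^ 2 + t ^ 2) / 2) ys ys := by
      have := ((hasDerivAt_pow 2 ys).const_add (xs ^ 2)).div_const 2
      simpa using this
    have ht2 := hasDerivAt_const_div_sqrt ((1 - μ) * q₁) hu1' (by show 0 < (xs + μ) ^ 2 + ys ^ 2; rw [hu1]; exact ha0)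
    have ht3 := hasDerivAt_const_div_sqrt μ hu2' (by show 0 < (xs + μ - 1) ^ 2 + ys ^ 2; rw [hu2]; norm_num)
    simp only [hu1, hu2, hs1, hs2] at ht2 ht3
    rw [show Real.sqrt a = r from by rw [← hr2, Real.sqrt_sq hr0.le]] at ht2
    have H := (ht1.add ht2).add ht3
    have Hf : HasDerivAt (fun t => OmegaC μ q₁ xs t)
        (ys + -((1 - μ) * q₁ * (2 * ys)) / (2 * r * a)
          + -(μ * (2 * ys)) / (2 * Real.sqrt 1 * 1)) ys := H
    rw [Hf.deriv]
    have hra : r * a = q₁ := by rw [← hr2, ← hr3]; ring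
    rw [Real.sqrt_one, mul_assoc 2 r a, hra]
    field_simp
    ring
end

section
/- Let μ ∈ (0,1) and q₁ ∈ (0,1], and set n = 1, A₂ = 0, M_b = 0 (classical photogravitational case). If (x, y) with y ≠ 0, r₁ ≠ 0, r₂ ≠ 0 satisfies the equilibrium equations ∂Ω/∂x(x,y) = 0 and ∂Ω/∂y(x,y) = 0, then necessarily r₁ = q₁^{1/3} and r₂ = 1; i.e., every non-collinear equilibrium point lies at distance q₁^{1/3} from the radiating primary and at distance 1 from the second primary. -/
lemma aux_deriv (c : ℝ) {g : ℝ → ℝ} {g' x : ℝ} (hg : HasDerivAt g g' x) (h0 : 0 < g x) :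
    HasDerivAt (fun s => c / Real.sqrt (g s))
      (-(c * g') / (2 * g x * Real.sqrt (g x))) x := by
  have hs : HasDerivAt (fun s => Real.sqrt (g s)) (g' / (2 * Real.sqrt (g x))) x :=
    hg.sqrt h0.ne'
  have hsx : Real.sqrt (g x) ≠ 0 := by positivity
  have h : HasDerivAt (fun s => c / Real.sqrt (g s)) _ x := (hasDerivAt_const x c).div hs hsx
  convert h using 1
  have h2 : Real.sqrt (g x) * Real.sqrt (g x) = g x := Real.mul_self_sqrt h0.le
  rw [sq, h2]
  field_simp
  ring

lemma cube_eq_one' {r : ℝ} (h0 : 0 < r) (h : r ^ 2 * r = 1) : r = 1 := by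
  nlinarith [sq_nonneg (r - 1), sq_nonneg (r + 1)]



/-- Every non-collinear (`y ≠ 0`) equilibrium point of the classical
photogravitational problem satisfies `r₁ = q₁^{1/3}` and `r₂ = 1`. -/
theorem noncollinear_equilibrium_distances
    (μ q₁ : ℝ) (hμ0 : 0 < μ) (hμ1 : μ < 1) (hq0 : 0 < q₁) (hq1 : q₁ ≤ 1)
    (x y : ℝ) (hy : y ≠ 0)
    (hr1 : Real.sqrt ((x + μ) ^ 2 + y ^ 2) ≠ 0)
    (hr2 : Real.sqrt ((x + μ - 1) ^ 2 + y ^ 2) ≠ 0)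
    (heqx : deriv (fun s => OmegaC μ q₁ s y) x = 0)
    (heqy : deriv (fun s => OmegaC μ q₁ x s) y = 0) :
    Real.sqrt ((x + μ) ^ 2 + y ^ 2) = q₁ ^ ((1 : ℝ) / 3) ∧
    Real.sqrt ((x + μ - 1) ^ 2 + y ^ 2) = 1 := by
  have hg1 : 0 < (x + μ) ^ 2 + y ^ 2 := by positivity
  have hg2 : 0 < (x + μ - 1) ^ 2 + y ^ 2 := by positivity
  set r1 := Real.sqrt ((x + μ) ^ 2 + y ^ 2) with hr1def
  set r2 := Real.sqrt ((x + μ - 1) ^ 2 + y ^ 2) with hr2def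
  have hr1p : 0 < r1 := Real.sqrt_pos.mpr hg1
  have hr2p : 0 < r2 := Real.sqrt_pos.mpr hg2
  have hsq1 : r1 ^ 2 = (x + μ) ^ 2 + y ^ 2 := Real.sq_sqrt hg1.le
  have hsq2 : r2 ^ 2 = (x + μ - 1) ^ 2 + y ^ 2 := Real.sq_sqrt hg2.le
  -- x-derivative
  have h1x : HasDerivAt (fun s : ℝ => (s ^ 2 + y ^ 2) / 2) x x := by
    have := ((hasDerivAt_pow 2 x).add_const (y ^ 2)).div_const 2
    simpa using this
  have hg1x : HasDerivAt (fun s : ℝ => (s + μ) ^ 2 + y ^ 2) (2 * (x + μ)) x := by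
    have := (((hasDerivAt_id x).add_const μ).pow 2).add_const (y ^ 2)
    simpa using this
  have hg2x : HasDerivAt (fun s : ℝ => (s + μ - 1) ^ 2 + y ^ 2) (2 * (x + μ - 1)) x := by
    have := ((((hasDerivAt_id x).add_const μ).sub_const 1).pow 2).add_const (y ^ 2)
    simpa using this
  have Hx : HasDerivAt (fun s => OmegaC μ q₁ s y)
      (x + -((1 - μ) * q₁ * (2 * (x + μ))) / (2 * ((x + μ) ^ 2 + y ^ 2) * r1)
        + -(μ * (2 * (x + μ - 1))) / (2 * ((x + μ - 1) ^ 2 + y ^ 2) * r2)) x := by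
    exact (h1x.add (aux_deriv ((1 - μ) * q₁) hg1x hg1)).add (aux_deriv μ hg2x hg2)
  have Ex : x + -((1 - μ) * q₁ * (2 * (x + μ))) / (2 * ((x + μ) ^ 2 + y ^ 2) * r1)
      + -(μ * (2 * (x + μ - 1))) / (2 * ((x + μ - 1) ^ 2 + y ^ 2) * r2) = 0 := by
    rw [← Hx.deriv]; exact heqx
  -- y-derivative
  have h1y : HasDerivAt (fun s : ℝ => (x ^ 2 + s ^ 2) / 2) y y := by
    have := ((hasDerivAt_pow 2 y).const_add (x ^ 2)).div_const 2
    simpa using this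
  have hg1y : HasDerivAt (fun s : ℝ => (x + μ) ^ 2 + s ^ 2) (2 * y) y := by
    have := (hasDerivAt_pow 2 y).const_add ((x + μ) ^ 2)
    simpa using this
  have hg2y : HasDerivAt (fun s : ℝ => (x + μ - 1) ^ 2 + s ^ 2) (2 * y) y := by
    have := (hasDerivAt_pow 2 y).const_add ((x + μ - 1) ^ 2)
    simpa using this
  have Hy : HasDerivAt (fun s => OmegaC μ q₁ x s)
      (y + -((1 - μ) * q₁ * (2 * y)) / (2 * ((x + μ) ^ 2 + y ^ 2) * r1)
        + -(μ * (2 * y)) / (2 * ((x + μ - 1) ^ 2 + y ^ 2) * r2)) y := by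
    exact (h1y.add (aux_deriv ((1 - μ) * q₁) hg1y hg1)).add (aux_deriv μ hg2y hg2)
  have Ey : y + -((1 - μ) * q₁ * (2 * y)) / (2 * ((x + μ) ^ 2 + y ^ 2) * r1)
      + -(μ * (2 * y)) / (2 * ((x + μ - 1) ^ 2 + y ^ 2) * r2) = 0 := by
    rw [← Hy.deriv]; exact heqy
  rw [← hsq1, ← hsq2] at Ex Ey
  -- define A and B
  set A := (1 - μ) * q₁ / (r1 ^ 2 * r1) with hA
  set B := μ / (r2 ^ 2 * r2) with hB
  have e2 : A + B = 1 := by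
    have h : y * (1 - A - B) = 0 := by
      rw [hA, hB]
      field_simp at Ey ⊢
      linarith [Ey]
    rcases mul_eq_zero.mp h with h' | h'
    · exact absurd h' hy
    · linarith
  have e1 : x - A * (x + μ) - B * (x + μ - 1) = 0 := by
    rw [hA, hB]
    field_simp at Ex ⊢
    linarith [Ex]
  have hBμ : B = μ := by linear_combination e1 + (x + μ) * e2
  have hd2 : r2 ^ 2 * r2 ≠ 0 := by positivity
  have hd1 : r1 ^ 2 * r1 ≠ 0 := by positivity
  have hr2cube : r2 ^ 2 * r2 = 1 := by
    rw [hB] at hBμ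
    have h := (div_eq_iff hd2).mp hBμ
    have := mul_left_cancel₀ hμ0.ne' (by linarith [h] : μ * 1 = μ * (r2 ^ 2 * r2))
    linarith
  have hr2one : r2 = 1 := cube_eq_one' hr2p hr2cube
  have hAμ : A = 1 - μ := by linarith
  have hr1cube : r1 ^ 2 * r1 = q₁ := by
    rw [hA] at hAμ
    have hne : (0:ℝ) < 1 - μ := by linarith
    have h := (div_eq_iff hd1).mp hAμ
    have := mul_left_cancel₀ hne.ne' (by linarith [h] : (1 - μ) * q₁ = (1 - μ) * (r1 ^ 2 * r1))
    linarith
  refine ⟨?_, hr2one⟩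
  have h3 : r1 ^ (3 : ℕ) = q₁ := by rw [pow_succ]; exact hr1cube
  rw [← h3, ← Real.rpow_natCast r1 3, ← Real.rpow_mul hr1p.le]
  norm_num
end
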